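/- Let P₁ and P₂ be convex subsets of real vector spaces and u₁, u₂ : P₁ × P₂ → ℝ be bi-affine functions (affine in each coordinate separately). If the game ⟨P₁, P₂, u₁, u₂⟩ is adversarial, i.e., for all σ, τ ∈ P₁ × P₂, u₁(σ) ≥ u₁(τ) ⟺ u₂(σ) ≤ u₂(τ), then there exist α > 0 and β ∈ ℝ such that u₂(σ) = -α·u₁(σ) + β for all σ ∈ P₁ × P₂. -/

import Mathlib

private lemma mem01 {x : ℝ} (h0 : 0 ≤ x) (h1 : x ≤ 1) : x ∈ Set.Icc (0:ℝ) 1 :=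
  Set.mem_Icc.mpr ⟨h0, h1⟩

private lemma coll_aux (p1 p2 q1 q2 r1 r2 : ℝ)
    (Hpq : ∀ t : ℝ, t ∈ Set.Icc (0:ℝ) 1 → t*p1 + (1-t)*q1 = r1 → t*p2 + (1-t)*q2 = r2)
    (Hqr : ∀ t : ℝ, t ∈ Set.Icc (0:ℝ) 1 → t*q1 + (1-t)*r1 = p1 → t*q2 + (1-t)*r2 = p2)
    (Hpr : ∀ t : ℝ, t ∈ Set.Icc (0:ℝ) 1 → t*p1 + (1-t)*r1 = q1 → t*p2 + (1-t)*r2 = q2)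
    (hlt : p1 < q1) :
    (q1 - p1) * (r2 - p2) = (q2 - p2) * (r1 - p1) := by
  rcases lt_or_ge r1 p1 with h | h
  · have hden : (0:ℝ) < q1 - r1 := by linarith
    have hdne : q1 - r1 ≠ 0 := ne_of_gt hden
    have ht : (p1 - r1)/(q1 - r1) ∈ Set.Icc (0:ℝ) 1 :=
      mem01 (div_nonneg (by linarith) hden.le) ((div_le_one hden).mpr (by linarith))
    have hxe : ((p1 - r1)/(q1 - r1))*q1 + (1-(p1 - r1)/(q1 - r1))*r1 = p1 := by
      field_simp
      ring
    have hy := Hqr _ ht hxe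
    linear_combination (r2 - q2) * hxe + (q1 - r1) * hy
  · rcases le_or_gt r1 q1 with h' | h'
    · have hden : (0:ℝ) < q1 - p1 := by linarith
      have hdne : q1 - p1 ≠ 0 := ne_of_gt hden
      have ht : (q1 - r1)/(q1 - p1) ∈ Set.Icc (0:ℝ) 1 :=
        mem01 (div_nonneg (by linarith) hden.le) ((div_le_one hden).mpr (by linarith))
      have hxe : ((q1 - r1)/(q1 - p1))*p1 + (1-(q1 - r1)/(q1 - p1))*q1 = r1 := by
        field_simp
        ring
      have hy := Hpq _ ht hxe
      linear_combination (q2 - p2) * hxe + (p1 - q1) * hy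
    · have hden : (0:ℝ) < r1 - p1 := by linarith
      have hdne : r1 - p1 ≠ 0 := ne_of_gt hden
      have ht : (r1 - q1)/(r1 - p1) ∈ Set.Icc (0:ℝ) 1 :=
        mem01 (div_nonneg (by linarith) hden.le) ((div_le_one hden).mpr (by linarith))
      have hxe : ((r1 - q1)/(r1 - p1))*p1 + (1-(r1 - q1)/(r1 - p1))*r1 = q1 := by
        field_simp
        ring
      have hy := Hpr _ ht hxe
      linear_combination (p2 - r2) * hxe + (r1 - p1) * hy

private lemma coll (p1 p2 q1 q2 r1 r2 : ℝ)
    (Hpq : ∀ t : ℝ, t ∈ Set.Icc (0:ℝ) 1 → t*p1 + (1-t)*q1 = r1 → t*p2 + (1-t)*q2 = r2)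
    (Hqr : ∀ t : ℝ, t ∈ Set.Icc (0:ℝ) 1 → t*q1 + (1-t)*r1 = p1 → t*q2 + (1-t)*r2 = p2)
    (Hpr : ∀ t : ℝ, t ∈ Set.Icc (0:ℝ) 1 → t*p1 + (1-t)*r1 = q1 → t*p2 + (1-t)*r2 = q2)
    (hne : p1 ≠ q1) :
    (q1 - p1) * (r2 - p2) = (q2 - p2) * (r1 - p1) := by
  rcases hne.lt_or_gt with h | h
  · exact coll_aux p1 p2 q1 q2 r1 r2 Hpq Hqr Hpr h
  · have hres := coll_aux q1 q2 p1 p2 r1 r2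
      (fun t ht hxe => by
        have h2 := Hpq (1-t) (mem01 (by linarith [ht.2]) (by linarith [ht.1]))
          (by linear_combination hxe)
        linear_combination h2)
      (fun t ht hxe => Hpr t ht hxe)
      (fun t ht hxe => Hqr t ht hxe)
      h
    linear_combination -hres

private lemma patch_lemma (a1 a2 b1 b2 c1 c2 d1 d2 : ℝ)
    (H : ∀ s t s' t' : ℝ, s ∈ Set.Icc (0:ℝ) 1 → t ∈ Set.Icc (0:ℝ) 1 →
      s' ∈ Set.Icc (0:ℝ) 1 → t' ∈ Set.Icc (0:ℝ) 1 →
      s*t*a1 + s*(1-t)*b1 + (1-s)*t*c1 + (1-s)*(1-t)*d1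
        = s'*t'*a1 + s'*(1-t')*b1 + (1-s')*t'*c1 + (1-s')*(1-t')*d1 →
      s*t*a2 + s*(1-t)*b2 + (1-s)*t*c2 + (1-s)*(1-t)*d2
        = s'*t'*a2 + s'*(1-t')*b2 + (1-s')*t'*c2 + (1-s')*(1-t')*d2) :
    (b1 - d1) * (c2 - d2) = (c1 - d1) * (b2 - d2) := by
  by_cases hg : c1 - d1 = 0
  · have h2 := H 0 1 0 0 (mem01 le_rfl zero_le_one) (mem01 zero_le_one le_rfl)
      (mem01 le_rfl zero_le_one) (mem01 le_rfl zero_le_one) (by linear_combination hg)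
    have hc2 : c2 = d2 := by linear_combination h2
    linear_combination (b1 - d1) * hc2 - (b2 - d2) * hg
  · by_contra hne
    have hc0ne : (b1 - d1)*(c2 - d2) - (c1 - d1)*(b2 - d2) ≠ 0 := sub_ne_zero_of_ne hne
    set c0 := (b1 - d1)*(c2 - d2) - (c1 - d1)*(b2 - d2) with hc0
    set k := (c1 - d1)*(a2 - b2 - c2 + d2) - (c2 - d2)*(a1 - b1 - c1 + d1) with hk
    set t : ℝ := if k = 2*c0 then 1/4 else 1/2 with htdef
    have ht0 : 0 < t := by rw [htdef]; split <;> norm_num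
    have ht1 : t ≤ 1/2 := by rw [htdef]; split <;> norm_num
    have htk : t*k - c0 ≠ 0 := by
      rw [htdef]; split
      · rename_i hcase
        rw [hcase]
        intro hcon
        apply hc0ne
        linarith
      · rename_i hcase
        intro hcon
        apply hcase
        linarith
    set w := (b1 - d1) + t*(a1 - b1 - c1 + d1) with hw
    have hgabs : 0 < |c1 - d1| := abs_pos.mpr hg
    have hden : (0:ℝ) < 2*(|w| + |c1 - d1|) := by positivity
    set s := t*|c1 - d1| / (2*(|w| + |c1 - d1|)) with hs
    have hs0 : 0 < s := by rw [hs]; positivity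
    have hs1 : s ≤ 1 := by
      rw [hs, div_le_one hden]
      nlinarith [abs_nonneg w, hgabs, ht0, ht1]
    have hswle : s * |w| ≤ t/2 * |c1 - d1| := by
      rw [hs, div_mul_eq_mul_div, div_le_iff₀ hden]
      nlinarith [abs_nonneg w, hgabs, ht0, mul_nonneg ht0.le (mul_nonneg hgabs.le hgabs.le)]
    set u := s*w/(c1 - d1) with hu
    have hrel : (c1 - d1) * (t + u) = (c1 - d1)*t + s*w := by
      rw [hu]; field_simp
    have hubound : |u| ≤ t/2 := by
      rw [hu, abs_div, div_le_iff₀ hgabs]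
      calc |s*w| = s * |w| := by rw [abs_mul, abs_of_pos hs0]
      _ ≤ t/2 * |c1 - d1| := hswle
    have hu1 := abs_le.mp hubound
    have ht'0 : 0 ≤ t + u := by linarith [hu1.1]
    have ht'1 : t + u ≤ 1 := by linarith [hu1.2]
    have hxeq : s*t*a1 + s*(1-t)*b1 + (1-s)*t*c1 + (1-s)*(1-t)*d1
        = 0*(t+u)*a1 + 0*(1-(t+u))*b1 + (1-0)*(t+u)*c1 + (1-0)*(1-(t+u))*d1 := by
      linear_combination -hrel - s*hw
    have hyeq := H s t 0 (t+u) (mem01 hs0.le hs1) (mem01 ht0.le (by linarith))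
      (mem01 le_rfl zero_le_one) (mem01 ht'0 ht'1) hxeq
    have hzero : s * (t*k - c0) = 0 := by
      linear_combination (c1 - d1)*hyeq + (c2 - d2)*hrel + s*t*hk - s*hc0 + s*(c2 - d2)*hw
    rcases mul_eq_zero.mp hzero with h | h
    · exact hs0.ne' h
    · exact htk h

private lemma main_aux {V₁ V₂ : Type*} [AddCommGroup V₁] [Module ℝ V₁] [AddCommGroup V₂]
    [Module ℝ V₂]
    (P₁ : Set V₁) (P₂ : Set V₂) (hP₁ : Convex ℝ P₁) (hP₂ : Convex ℝ P₂)
    (u₁ u₂ : V₁ → V₂ → ℝ)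
    (h1L : ∀ x ∈ P₁, ∀ y ∈ P₁, ∀ z ∈ P₂, ∀ t : ℝ, t ∈ Set.Icc (0:ℝ) 1 →
        u₁ (t • x + (1 - t) • y) z = t * u₁ x z + (1 - t) * u₁ y z)
    (h1R : ∀ x ∈ P₁, ∀ y ∈ P₂, ∀ z ∈ P₂, ∀ t : ℝ, t ∈ Set.Icc (0:ℝ) 1 →
        u₁ x (t • y + (1 - t) • z) = t * u₁ x y + (1 - t) * u₁ x z)
    (h2L : ∀ x ∈ P₁, ∀ y ∈ P₁, ∀ z ∈ P₂, ∀ t : ℝ, t ∈ Set.Icc (0:ℝ) 1 →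
        u₂ (t • x + (1 - t) • y) z = t * u₂ x z + (1 - t) * u₂ y z)
    (h2R : ∀ x ∈ P₁, ∀ y ∈ P₂, ∀ z ∈ P₂, ∀ t : ℝ, t ∈ Set.Icc (0:ℝ) 1 →
        u₂ x (t • y + (1 - t) • z) = t * u₂ x y + (1 - t) * u₂ x z)
    (hadv : ∀ σ₁ ∈ P₁, ∀ σ₂ ∈ P₂, ∀ τ₁ ∈ P₁, ∀ τ₂ ∈ P₂,
      (u₁ σ₁ σ₂ ≥ u₁ τ₁ τ₂ ↔ u₂ σ₁ σ₂ ≤ u₂ τ₁ τ₂))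
    (e₁ : V₁) (he₁ : e₁ ∈ P₁) (e₂ : V₁) (he₂ : e₂ ∈ P₁) (y₀ : V₂) (hy₀ : y₀ ∈ P₂)
    (hx : u₁ e₁ y₀ ≠ u₁ e₂ y₀) :
    ∃ α : ℝ, 0 < α ∧ ∃ β : ℝ, ∀ σ₁ ∈ P₁, ∀ σ₂ ∈ P₂, u₂ σ₁ σ₂ = -α * u₁ σ₁ σ₂ + β := by
  have key : ∀ x₁ ∈ P₁, ∀ y₁ ∈ P₂, ∀ x₂ ∈ P₁, ∀ y₂ ∈ P₂,
      u₁ x₁ y₁ = u₁ x₂ y₂ → u₂ x₁ y₁ = u₂ x₂ y₂ := by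
    intro x₁ hx₁ y₁ hy₁ x₂ hx₂ y₂ hy₂ heq
    have h1 := (hadv x₁ hx₁ y₁ hy₁ x₂ hx₂ y₂ hy₂).mp heq.ge
    have h2 := (hadv x₂ hx₂ y₂ hy₂ x₁ hx₁ y₁ hy₁).mp heq.le
    linarith
  have strict : ∀ x₁ ∈ P₁, ∀ y₁ ∈ P₂, ∀ x₂ ∈ P₁, ∀ y₂ ∈ P₂,
      u₁ x₁ y₁ < u₁ x₂ y₂ → u₂ x₂ y₂ < u₂ x₁ y₁ := by
    intro x₁ hx₁ y₁ hy₁ x₂ hx₂ y₂ hy₂ hlt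
    have h1 := (hadv x₂ hx₂ y₂ hy₂ x₁ hx₁ y₁ hy₁).mp hlt.le
    rcases h1.lt_or_eq with hr | hr
    · exact hr
    · exfalso
      have h3 := (hadv x₁ hx₁ y₁ hy₁ x₂ hx₂ y₂ hy₂).mpr hr.ge
      linarith
  have mem₁ : ∀ x ∈ P₁, ∀ y ∈ P₁, ∀ t : ℝ, t ∈ Set.Icc (0:ℝ) 1 →
      t • x + (1-t) • y ∈ P₁ := by
    intro x hxm y hym t ht
    exact hP₁ hxm hym ht.1 (by linarith [ht.2]) (by ring)
  have mem₂ : ∀ x ∈ P₂, ∀ y ∈ P₂, ∀ t : ℝ, t ∈ Set.Icc (0:ℝ) 1 →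
      t • x + (1-t) • y ∈ P₂ := by
    intro x hxm y hym t ht
    exact hP₂ hxm hym ht.1 (by linarith [ht.2]) (by ring)
  have hd : u₁ e₁ y₀ - u₁ e₂ y₀ ≠ 0 := sub_ne_zero_of_ne hx
  set α := (u₂ e₂ y₀ - u₂ e₁ y₀) / (u₁ e₁ y₀ - u₁ e₂ y₀) with hαd
  have hα : 0 < α := by
    rcases hx.lt_or_gt with h | h
    · have hstrict := strict e₁ he₁ y₀ hy₀ e₂ he₂ y₀ hy₀ h
      rw [hαd]
      exact div_pos_iff.mpr (Or.inr ⟨by linarith, by linarith⟩)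
    · have hstrict := strict e₂ he₂ y₀ hy₀ e₁ he₁ y₀ hy₀ h
      rw [hαd]
      exact div_pos_iff.mpr (Or.inl ⟨by linarith, by linarith⟩)
  set β := u₂ e₁ y₀ + α * u₁ e₁ y₀ with hβd
  have hm1 : (u₁ e₁ y₀ - u₁ e₂ y₀) * α = u₂ e₂ y₀ - u₂ e₁ y₀ := by
    rw [hαd]; field_simp
  have hline : ∀ X Y : ℝ,
      (u₁ e₂ y₀ - u₁ e₁ y₀) * (Y - u₂ e₁ y₀) = (u₂ e₂ y₀ - u₂ e₁ y₀) * (X - u₁ e₁ y₀) →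
      Y = -α * X + β := by
    intro X Y hc
    apply mul_left_cancel₀ hd
    rw [hβd]
    linear_combination (X - u₁ e₁ y₀) * hm1 - hc
  refine ⟨α, hα, β, ?_⟩
  intro ρ₁ hρ₁ ρ₂ hρ₂
  have hT : u₂ ρ₁ y₀ = -α * u₁ ρ₁ y₀ + β := by
    apply hline
    apply coll (u₁ e₁ y₀) (u₂ e₁ y₀) (u₁ e₂ y₀) (u₂ e₂ y₀) (u₁ ρ₁ y₀) (u₂ ρ₁ y₀) ?_ ?_ ?_ hx
    · intro t ht hxe
      have hm := mem₁ e₁ he₁ e₂ he₂ t ht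
      have q1 := h1L e₁ he₁ e₂ he₂ y₀ hy₀ t ht
      have q2 := h2L e₁ he₁ e₂ he₂ y₀ hy₀ t ht
      have hk := key _ hm y₀ hy₀ ρ₁ hρ₁ y₀ hy₀ (by rw [q1]; exact hxe)
      rw [q2] at hk; exact hk
    · intro t ht hxe
      have hm := mem₁ e₂ he₂ ρ₁ hρ₁ t ht
      have q1 := h1L e₂ he₂ ρ₁ hρ₁ y₀ hy₀ t ht
      have q2 := h2L e₂ he₂ ρ₁ hρ₁ y₀ hy₀ t ht
      have hk := key _ hm y₀ hy₀ e₁ he₁ y₀ hy₀ (by rw [q1]; exact hxe)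
      rw [q2] at hk; exact hk
    · intro t ht hxe
      have hm := mem₁ e₁ he₁ ρ₁ hρ₁ t ht
      have q1 := h1L e₁ he₁ ρ₁ hρ₁ y₀ hy₀ t ht
      have q2 := h2L e₁ he₁ ρ₁ hρ₁ y₀ hy₀ t ht
      have hk := key _ hm y₀ hy₀ e₂ he₂ y₀ hy₀ (by rw [q1]; exact hxe)
      rw [q2] at hk; exact hk
  obtain ⟨e, he, hBl, hBD⟩ : ∃ e, e ∈ P₁ ∧ u₂ e y₀ = -α * u₁ e y₀ + β ∧
      u₁ e y₀ ≠ u₁ ρ₁ y₀ := by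
    by_cases hce : u₁ ρ₁ y₀ = u₁ e₁ y₀
    · refine ⟨e₂, he₂, hline _ _ (by ring), ?_⟩
      rw [hce]
      exact Ne.symm hx
    · exact ⟨e₁, he₁, hline _ _ (by ring), fun hcon => hce hcon.symm⟩
  have hmemρ₂ : ∀ t : ℝ, t ∈ Set.Icc (0:ℝ) 1 → t • ρ₂ + (1-t) • y₀ ∈ P₂ :=
    fun t ht => mem₂ ρ₂ hρ₂ y₀ hy₀ t ht
  have expand1 : ∀ s t : ℝ, s ∈ Set.Icc (0:ℝ) 1 → t ∈ Set.Icc (0:ℝ) 1 →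
      u₁ (s • e + (1-s) • ρ₁) (t • ρ₂ + (1-t) • y₀)
        = s*t*(u₁ e ρ₂) + s*(1-t)*(u₁ e y₀) + (1-s)*t*(u₁ ρ₁ ρ₂) + (1-s)*(1-t)*(u₁ ρ₁ y₀) := by
    intro s t hs ht
    rw [h1L e he ρ₁ hρ₁ _ (hmemρ₂ t ht) s hs, h1R e he ρ₂ hρ₂ y₀ hy₀ t ht,
      h1R ρ₁ hρ₁ ρ₂ hρ₂ y₀ hy₀ t ht]
    ring
  have expand2 : ∀ s t : ℝ, s ∈ Set.Icc (0:ℝ) 1 → t ∈ Set.Icc (0:ℝ) 1 →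
      u₂ (s • e + (1-s) • ρ₁) (t • ρ₂ + (1-t) • y₀)
        = s*t*(u₂ e ρ₂) + s*(1-t)*(u₂ e y₀) + (1-s)*t*(u₂ ρ₁ ρ₂) + (1-s)*(1-t)*(u₂ ρ₁ y₀) := by
    intro s t hs ht
    rw [h2L e he ρ₁ hρ₁ _ (hmemρ₂ t ht) s hs, h2R e he ρ₂ hρ₂ y₀ hy₀ t ht,
      h2R ρ₁ hρ₁ ρ₂ hρ₂ y₀ hy₀ t ht]
    ring
  have hcross := patch_lemma (u₁ e ρ₂) (u₂ e ρ₂) (u₁ e y₀) (u₂ e y₀)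
      (u₁ ρ₁ ρ₂) (u₂ ρ₁ ρ₂) (u₁ ρ₁ y₀) (u₂ ρ₁ y₀)
      (by
        intro s t s' t' hs ht hs' ht' hxe
        rw [← expand1 s t hs ht, ← expand1 s' t' hs' ht'] at hxe
        have hk := key _ (mem₁ e he ρ₁ hρ₁ s hs) _ (hmemρ₂ t ht)
          _ (mem₁ e he ρ₁ hρ₁ s' hs') _ (hmemρ₂ t' ht') hxe
        rw [expand2 s t hs ht, expand2 s' t' hs' ht'] at hk
        exact hk)
  have hBDne : u₁ e y₀ - u₁ ρ₁ y₀ ≠ 0 := sub_ne_zero_of_ne hBD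
  have h5 : (u₁ e y₀ - u₁ ρ₁ y₀) * (u₂ ρ₁ ρ₂ - u₂ ρ₁ y₀)
      = (u₁ e y₀ - u₁ ρ₁ y₀) * (-α * (u₁ ρ₁ ρ₂ - u₁ ρ₁ y₀)) := by
    linear_combination hcross + (u₁ ρ₁ ρ₂ - u₁ ρ₁ y₀) * hBl - (u₁ ρ₁ ρ₂ - u₁ ρ₁ y₀) * hT
  have h6 := mul_left_cancel₀ hBDne h5
  linear_combination h6 + hT

theorem stmt_2 {V₁ V₂ : Type*} [AddCommGroup V₁] [Module ℝ V₁] [AddCommGroup V₂] [Module ℝ V₂]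
    (P₁ : Set V₁) (P₂ : Set V₂) (hP₁ : Convex ℝ P₁) (hP₂ : Convex ℝ P₂)
    (u₁ u₂ : V₁ → V₂ → ℝ)
    (hbi : ∀ u ∈ ({u₁, u₂} : Set (V₁ → V₂ → ℝ)),
      (∀ x ∈ P₁, ∀ y ∈ P₁, ∀ z ∈ P₂, ∀ t : ℝ, t ∈ Set.Icc (0:ℝ) 1 →
        u (t • x + (1 - t) • y) z = t * u x z + (1 - t) * u y z) ∧
      (∀ x ∈ P₁, ∀ y ∈ P₂, ∀ z ∈ P₂, ∀ t : ℝ, t ∈ Set.Icc (0:ℝ) 1 →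
        u x (t • y + (1 - t) • z) = t * u x y + (1 - t) * u x z))
    (hadv : ∀ σ₁ ∈ P₁, ∀ σ₂ ∈ P₂, ∀ τ₁ ∈ P₁, ∀ τ₂ ∈ P₂,
      (u₁ σ₁ σ₂ ≥ u₁ τ₁ τ₂ ↔ u₂ σ₁ σ₂ ≤ u₂ τ₁ τ₂)) :
    ∃ α : ℝ, 0 < α ∧ ∃ β : ℝ, ∀ σ₁ ∈ P₁, ∀ σ₂ ∈ P₂, u₂ σ₁ σ₂ = -α * u₁ σ₁ σ₂ + β := by
  obtain ⟨h1L, h1R⟩ := hbi u₁ (Set.mem_insert _ _)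
  obtain ⟨h2L, h2R⟩ := hbi u₂ (Set.mem_insert_of_mem _ rfl)
  by_cases hne : ∃ σ₁ ∈ P₁, ∃ σ₂ ∈ P₂, ∃ τ₁ ∈ P₁, ∃ τ₂ ∈ P₂, u₁ σ₁ σ₂ ≠ u₁ τ₁ τ₂
  · obtain ⟨σ₁, hσ₁, σ₂, hσ₂, τ₁, hτ₁, τ₂, hτ₂, hneq⟩ := hne
    by_cases hmid : u₁ σ₁ σ₂ = u₁ σ₁ τ₂
    · have hx : u₁ σ₁ τ₂ ≠ u₁ τ₁ τ₂ := by rw [← hmid]; exact hneq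
      exact main_aux P₁ P₂ hP₁ hP₂ u₁ u₂ h1L h1R h2L h2R hadv σ₁ hσ₁ τ₁ hτ₁ τ₂ hτ₂ hx
    · obtain ⟨α, hα, β, h⟩ := main_aux P₂ P₁ hP₂ hP₁ (fun y x => u₁ x y) (fun y x => u₂ x y)
        (fun x hxm y hym z hzm t ht => h1R z hzm x hxm y hym t ht)
        (fun x hxm y hym z hzm t ht => h1L y hym z hzm x hxm t ht)
        (fun x hxm y hym z hzm t ht => h2R z hzm x hxm y hym t ht)
        (fun x hxm y hym z hzm t ht => h2L y hym z hzm x hxm t ht)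
        (fun a ha b hb c hc d hd => hadv b hb a ha d hd c hc)
        σ₂ hσ₂ τ₂ hτ₂ σ₁ hσ₁ hmid
      exact ⟨α, hα, β, fun x hx y hy => h y hy x hx⟩
  · push_neg at hne
    by_cases hex : ∃ x, x ∈ P₁
    · obtain ⟨x₀, hx₀⟩ := hex
      by_cases hey : ∃ y, y ∈ P₂
      · obtain ⟨y₀, hy₀⟩ := hey
        refine ⟨1, one_pos, u₂ x₀ y₀ + u₁ x₀ y₀, fun a ha b hb => ?_⟩
        have h1 : u₁ a b = u₁ x₀ y₀ := hne a ha b hb x₀ hx₀ y₀ hy₀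
        have h2 := (hadv a ha b hb x₀ hx₀ y₀ hy₀).mp h1.ge
        have h3 := (hadv x₀ hx₀ y₀ hy₀ a ha b hb).mp h1.le
        linarith
      · exact ⟨1, one_pos, 0, fun a ha b hb => absurd ⟨b, hb⟩ hey⟩
    · exact ⟨1, one_pos, 0, fun a ha => absurd ⟨a, ha⟩ hex⟩
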